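/- Let n > 2. If (x,n-1) is irreducible in S_Γ^s and (x,n) ∈ S_Γ^s, then (x,n) is irreducible in S_Γ^s. -/
import Mathlib


/-- The Leamer monoid as a subset of ℕ × ℕ: (0,0) together with all (x,n), n ≥ 1,
such that x + i*s ∈ Γ for all 0 ≤ i ≤ n. -/
def Leamer (Γ : AddSubmonoid ℕ) (s : ℕ) : Set (ℕ × ℕ) :=
  {p | p = (0, 0) ∨ (1 ≤ p.2 ∧ ∀ i ≤ p.2, p.1 + i * s ∈ Γ)}

/-- An irreducible (atom) of a subset S of ℕ × ℕ: a nonzero element of S that is not the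
sum of two nonzero elements of S. -/
def LIrred (S : Set (ℕ × ℕ)) (z : ℕ × ℕ) : Prop :=
  z ∈ S ∧ z ≠ 0 ∧ ∀ a b : ℕ × ℕ, a ∈ S → b ∈ S → a ≠ 0 → b ≠ 0 → z ≠ a + b

/-- A reducible element of S: an element of S that is the sum of two nonzero elements of S. -/
def LReducible (S : Set (ℕ × ℕ)) (z : ℕ × ℕ) : Prop :=
  z ∈ S ∧ ∃ a b : ℕ × ℕ, a ∈ S ∧ b ∈ S ∧ a ≠ 0 ∧ b ≠ 0 ∧ z = a + b

/-- The set of factorization lengths of z into irreducibles of S. -/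
def LSet (S : Set (ℕ × ℕ)) (z : ℕ × ℕ) : Set ℕ :=
  {r | ∃ l : Multiset (ℕ × ℕ), Multiset.card l = r ∧ (∀ a ∈ l, LIrred S a) ∧ l.sum = z}

/-- The Delta set of z: differences of successive factorization lengths. -/
def LDelta (S : Set (ℕ × ℕ)) (z : ℕ × ℕ) : Set ℕ :=
  {d | ∃ a b, a ∈ LSet S z ∧ b ∈ LSet S z ∧ a < b ∧
    (∀ c, a < c → c < b → c ∉ LSet S z) ∧ d = b - a}

/-- The Delta set of the monoid S. -/
def LDeltaMonoid (S : Set (ℕ × ℕ)) : Set ℕ :=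
  {d | ∃ z, z ∈ S ∧ z ≠ 0 ∧ d ∈ LDelta S z}

/-- The Frobenius number of a numerical monoid Γ. -/
noncomputable def Frob (Γ : AddSubmonoid ℕ) : ℕ := sSup {x | x ∉ Γ}

/-- The numerical monoid generated by the arithmetic sequence m, m+s, ..., m+ks. -/
def ArithGamma (m k s : ℕ) : AddSubmonoid ℕ :=
  AddSubmonoid.closure {v | ∃ j ≤ k, v = m + j * s}

theorem stmt4 (Γ : AddSubmonoid ℕ) (hΓ : {x : ℕ | x ∉ Γ}.Finite) (s : ℕ) (hs : s ∉ Γ)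
    (x n : ℕ) (hn : 2 < n) (h1 : LIrred (Leamer Γ s) (x, n - 1))
    (h2 : (x, n) ∈ Leamer Γ s) : LIrred (Leamer Γ s) (x, n) := by
  refine ⟨h2, ?_, ?_⟩
  · intro h
    have : n = 0 := congrArg Prod.snd h
    omega
  intro a b ha hb ha0 hb0 heq
  -- extract structure of a and b
  have hamem : 1 ≤ a.2 ∧ ∀ i ≤ a.2, a.1 + i * s ∈ Γ := by
    rcases ha with h | h
    · exact absurd h ha0
    · exact h
  have hbmem : 1 ≤ b.2 ∧ ∀ i ≤ b.2, b.1 + i * s ∈ Γ := by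
    rcases hb with h | h
    · exact absurd h hb0
    · exact h
  have hx : x = a.1 + b.1 := congrArg Prod.fst heq
  have hn2 : n = a.2 + b.2 := congrArg Prod.snd heq
  rcases le_or_gt 2 a.2 with hA | hA
  · -- use (a.1, a.2 - 1) + b = (x, n-1)
    refine h1.2.2 (a.1, a.2 - 1) b ?_ hb ?_ hb0 ?_
    · right
      refine ⟨by omega, fun i hi => hamem.2 i (by omega)⟩
    · intro h
      have : a.2 - 1 = 0 := congrArg Prod.snd h
      omega
    · have : (x, n - 1) = ((a.1, a.2 - 1) : ℕ × ℕ) + b := by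
        apply Prod.ext <;> simp <;> omega
      exact this
  · have hB : 2 ≤ b.2 := by omega
    refine h1.2.2 a (b.1, b.2 - 1) ha ?_ ha0 ?_ ?_
    · right
      refine ⟨by omega, fun i hi => hbmem.2 i (by omega)⟩
    · intro h
      have : b.2 - 1 = 0 := congrArg Prod.snd h
      omega
    · have : (x, n - 1) = a + ((b.1, b.2 - 1) : ℕ × ℕ) := by
        apply Prod.ext <;> simp <;> omega
      exact this
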